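/- Let m ≥ 1 be a natural number and β ∈ (0, 1) a real number. Let X be an integer-valued random variable with 1 ≤ X ≤ m almost surely and E[X] ≥ β·m, and let g : ℕ → ℝ be a nonnegative nondecreasing function. Then E[g(m − X)] ≤ (1/2)·g(m) + (1/2)·g(⌊2(1−β)·m⌋). -/

import Mathlib

open MeasureTheory

/-- If `X` is an integer-valued random variable with `1 ≤ X ≤ m` almost surely
and `E[X] ≥ β·m`, and `g : ℕ → ℝ` is nonnegative and nondecreasing, then
`E[g(m − X)] ≤ (1/2)·g(m) + (1/2)·g(⌊2(1−β)·m⌋)`. -/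
theorem predictor_expected_transition_bound {Ω : Type*} [MeasurableSpace Ω]
    (μ : Measure Ω) [IsProbabilityMeasure μ]
    (m : ℕ) (hm : 1 ≤ m) (β : ℝ) (hβ0 : 0 < β) (hβ1 : β < 1)
    (X : Ω → ℕ) (hXmeas : Measurable X)
    (hX1 : ∀ᵐ ω ∂μ, 1 ≤ X ω) (hXm : ∀ᵐ ω ∂μ, X ω ≤ m)
    (hEX : β * m ≤ ∫ ω, (X ω : ℝ) ∂μ)
    (g : ℕ → ℝ) (hg0 : ∀ k, 0 ≤ g k) (hgmono : Monotone g) :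
    ∫ ω, g (m - X ω) ∂μ ≤ (1 / 2) * g m + (1 / 2) * g ⌊2 * (1 - β) * m⌋₊ := by
  set c : ℕ := ⌊2 * (1 - β) * m⌋₊ with hc
  set A : Set Ω := {ω | m - X ω ≤ c} with hA
  have hYmeas : Measurable fun ω => (m - X ω : ℕ) :=
    (measurable_from_nat (f := fun n => (m - n : ℕ))).comp hXmeas
  have hAmeas : MeasurableSet A := by
    have : A = (fun ω => (m - X ω : ℕ)) ⁻¹' (Set.Iic c) := rfl
    rw [this]; exact hYmeas measurableSet_Iic
  -- measurability of g (m - X)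
  have hgmeas : Measurable fun ω => g (m - X ω) :=
    (measurable_from_nat (f := fun n => g (m - n))).comp hXmeas
  have hgbdd : ∀ ω, g (m - X ω) ≤ g m := fun ω => hgmono (Nat.sub_le _ _)
  have hgint : Integrable (fun ω => g (m - X ω)) μ := by
    refine Integrable.mono' (integrable_const (g m)) hgmeas.aestronglyMeasurable ?_
    filter_upwards with ω
    rw [Real.norm_eq_abs, abs_of_nonneg (hg0 _)]
    exact hgbdd ω
  -- integrability of (m - X : ℝ)
  have hYint : Integrable (fun ω => ((m - X ω : ℕ) : ℝ)) μ := by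
    refine Integrable.mono' (integrable_const (m : ℝ)) (((measurable_from_nat (f := fun n => ((m - n : ℕ) : ℝ))).comp hXmeas).aestronglyMeasurable) ?_
    filter_upwards with ω
    rw [Real.norm_eq_abs, abs_of_nonneg (by positivity)]
    exact_mod_cast Nat.cast_le.mpr (Nat.sub_le _ _)
  -- E[m - X] ≤ (1-β) m
  have hXint : Integrable (fun ω => (X ω : ℝ)) μ := by
    refine Integrable.mono' (integrable_const (m : ℝ)) (((measurable_from_nat (f := fun n => ((n : ℕ) : ℝ))).comp hXmeas).aestronglyMeasurable) ?_
    filter_upwards [hXm] with ω hω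
    rw [Real.norm_eq_abs, abs_of_nonneg (by positivity)]
    exact_mod_cast hω
  have hEY : ∫ ω, ((m - X ω : ℕ) : ℝ) ∂μ ≤ (1 - β) * m := by
    have heq : (fun ω => ((m - X ω : ℕ) : ℝ)) =ᵐ[μ] fun ω => (m : ℝ) - (X ω : ℝ) := by
      filter_upwards [hXm] with ω hω
      rw [Nat.cast_sub hω]
    rw [integral_congr_ae heq, integral_sub (integrable_const _) hXint, integral_const]
    simp only [Measure.real, measure_univ, ENNReal.toReal_one, smul_eq_mul, one_mul]
    nlinarith [hEX]
  -- Markov: μ Aᶜ ≤ 1/2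
  have h2m : (2 * (1 - β) * m : ℝ) < c + 1 := Nat.lt_floor_add_one _
  have hmarkov : ((c : ℝ) + 1) * (μ {ω | ((c : ℝ) + 1) ≤ ((m - X ω : ℕ) : ℝ)}).toReal
      ≤ ∫ ω, ((m - X ω : ℕ) : ℝ) ∂μ :=
    mul_meas_ge_le_integral_of_nonneg (Filter.Eventually.of_forall fun ω => by positivity)
      hYint _
  have hAc : Aᶜ = {ω | ((c : ℝ) + 1) ≤ ((m - X ω : ℕ) : ℝ)} := by
    ext ω
    simp only [hA, Set.mem_compl_iff, Set.mem_setOf_eq, not_le]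
    constructor
    · intro h; exact_mod_cast Nat.succ_le_of_lt h
    · intro h; exact_mod_cast Nat.lt_of_succ_le (by exact_mod_cast h)
  have hq : (μ Aᶜ).toReal ≤ 1 / 2 := by
    rw [hAc]
    have := hmarkov.trans hEY
    nlinarith [this, h2m, ENNReal.toReal_nonneg (a := μ {ω | ((c : ℝ) + 1) ≤ ((m - X ω : ℕ) : ℝ)})]
  -- p + q = 1
  have hpq : (μ A).toReal + (μ Aᶜ).toReal = 1 := by
    rw [← ENNReal.toReal_add (measure_ne_top _ _) (measure_ne_top _ _),
      measure_add_measure_compl hAmeas, measure_univ, ENNReal.toReal_one]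
  -- pointwise bound
  set d : ℕ := min c m with hd
  have hpt : ∀ ω, g (m - X ω) ≤
      A.indicator (fun _ => g d) ω + Aᶜ.indicator (fun _ => g m) ω := by
    intro ω
    by_cases h : ω ∈ A
    · rw [Set.indicator_of_mem h, Set.indicator_of_notMem (by simpa using h)]
      have : m - X ω ≤ d := le_min h (Nat.sub_le _ _)
      simpa using hgmono this
    · rw [Set.indicator_of_notMem h, Set.indicator_of_mem (by simpa using h)]
      simpa using hgbdd ω
  have hint : ∫ ω, g (m - X ω) ∂μ ≤
      (μ A).toReal * g d + (μ Aᶜ).toReal * g m := by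
    have h1 : ∫ ω, (A.indicator (fun _ => g d) ω + Aᶜ.indicator (fun _ => g m) ω) ∂μ
        = (μ A).toReal * g d + (μ Aᶜ).toReal * g m := by
      rw [integral_add ((integrable_const _).indicator hAmeas)
        ((integrable_const _).indicator hAmeas.compl),
        integral_indicator_const _ hAmeas, integral_indicator_const _ hAmeas.compl]
      simp [smul_eq_mul, Measure.real]
    rw [← h1]
    exact integral_mono hgint
      (((integrable_const _).indicator hAmeas).add ((integrable_const _).indicator hAmeas.compl))
      hpt
  refine hint.trans ?_
  have hgd1 : g d ≤ g c := hgmono (min_le_left _ _)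
  have hgd2 : g d ≤ g m := hgmono (min_le_right _ _)
  nlinarith [hq, hpq, hgd1, hgd2, hg0 d, hg0 c, hg0 m, ENNReal.toReal_nonneg (a := μ A), ENNReal.toReal_nonneg (a := μ Aᶜ)]
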